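/- In a one-ended infinite tree t (every two infinite self-avoiding paths have finite symmetric difference) spanning a locally finite graph component, for every finite set D of vertices, the set desc_t(D) of vertices whose unique infinite path in t meets D is finite. -/

import Mathlib

/-- a ray (infinite self-avoiding path) in the graph `t` -/
def IsRay {V : Type*} (t : SimpleGraph V) (r : ℕ → V) : Prop :=
  Function.Injective r ∧ ∀ n, t.Adj (r n) (r (n + 1))

namespace Stmt11Aux

variable {V : Type*} {t : SimpleGraph V}

/-- tails of rays are rays -/
lemma isray_shift {r : ℕ → V} (hr : IsRay t r) (k : ℕ) :
    IsRay t (fun i => r (k + i)) := by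
  constructor
  · intro a b hab
    have := hr.1 hab
    omega
  · intro n
    exact hr.2 (k + n)

/-- the walk along the first `n` steps of an adjacency-respecting sequence -/
def raySeg (t : SimpleGraph V) (r : ℕ → V) (h : ∀ n, t.Adj (r n) (r (n + 1))) :
    (n : ℕ) → t.Walk (r 0) (r n)
  | 0 => SimpleGraph.Walk.nil
  | (n + 1) => (raySeg t r h n).concat (h n)

lemma raySeg_support (t : SimpleGraph V) (r : ℕ → V) (h : ∀ n, t.Adj (r n) (r (n + 1))) :
    ∀ n, (raySeg t r h n).support = (List.range (n + 1)).map r := by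
  intro n
  induction n with
  | zero => simp [raySeg, List.range_succ]
  | succ n ih =>
      rw [raySeg, SimpleGraph.Walk.support_concat, ih, List.range_succ (n := n + 1)]
      simp

lemma raySeg_isPath (r : ℕ → V) (hr : IsRay t r) (n : ℕ) :
    (raySeg t r hr.2 n).IsPath := by
  rw [SimpleGraph.Walk.isPath_def, raySeg_support]
  exact List.nodup_range.map hr.1

/-- two rays from a common vertex that diverge immediately never meet again -/
lemma meet (hacyc : t.IsAcyclic) {r₁ r₂ : ℕ → V} (h₁ : IsRay t r₁) (h₂ : IsRay t r₂)
    (h0 : r₁ 0 = r₂ 0) (hne : r₁ 1 ≠ r₂ 1) {a b : ℕ} (ha : 1 ≤ a) (hb : 1 ≤ b) :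
    r₁ a ≠ r₂ b := by
  intro he
  have hp₁ : (raySeg t r₁ h₁.2 a).IsPath := raySeg_isPath r₁ h₁ a
  let p₂ : t.Walk (r₁ 0) (r₁ a) := (raySeg t r₂ h₂.2 b).copy h0.symm he.symm
  have hp₂ : p₂.IsPath := by
    have := raySeg_isPath r₂ h₂ b
    rw [SimpleGraph.Walk.isPath_def] at this ⊢
    rwa [SimpleGraph.Walk.support_copy]
  have hpq := hacyc.path_unique ⟨raySeg t r₁ h₁.2 a, hp₁⟩ ⟨p₂, hp₂⟩
  have hsup : (List.range (a + 1)).map r₁ = (List.range (b + 1)).map r₂ := by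
    have := congrArg (fun q : t.Path (r₁ 0) (r₁ a) => q.1.support) hpq
    simpa [p₂, SimpleGraph.Walk.support_copy, raySeg_support] using this
  have h1 : ((List.range (a + 1)).map r₁)[1]? = some (r₁ 1) := by
    rw [List.getElem?_map, List.getElem?_range (by omega)]; rfl
  have h2 : ((List.range (b + 1)).map r₂)[1]? = some (r₂ 1) := by
    rw [List.getElem?_map, List.getElem?_range (by omega)]; rfl
  rw [hsup, h2] at h1
  exact hne (Option.some_injective _ h1.symm)

/-- in a one-ended tree, rays from a common vertex coincide -/
lemma ray_unique (hacyc : t.IsAcyclic)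
    (hone : ∀ r₁ r₂ : ℕ → V, IsRay t r₁ → IsRay t r₂ →
      (symmDiff (Set.range r₁) (Set.range r₂)).Finite)
    {r₁ r₂ : ℕ → V} (h₁ : IsRay t r₁) (h₂ : IsRay t r₂) (h0 : r₁ 0 = r₂ 0) :
    r₁ = r₂ := by
  classical
  by_contra hne
  have hex : ∃ k, r₁ k ≠ r₂ k := by
    by_contra hc
    push_neg at hc
    exact hne (funext hc)
  set k := Nat.find hex with hkdef
  have hk : r₁ k ≠ r₂ k := Nat.find_spec hex
  have hmin : ∀ j < k, r₁ j = r₂ j := by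
    intro j hj
    by_contra hc
    have h2 : k ≤ j := hkdef ▸ Nat.find_le hc
    omega
  have hk1 : 1 ≤ k := by
    rcases Nat.eq_zero_or_pos k with h | h
    · exact absurd (h ▸ hk) (by simp [h0])
    · exact h
  -- shifted rays diverging immediately
  set q₁ : ℕ → V := fun i => r₁ (k - 1 + i) with hq₁
  set q₂ : ℕ → V := fun i => r₂ (k - 1 + i) with hq₂
  have hq₁r : IsRay t q₁ := isray_shift h₁ (k - 1)
  have hq₂r : IsRay t q₂ := isray_shift h₂ (k - 1)
  have hq0 : q₁ 0 = q₂ 0 := by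
    simp only [hq₁, hq₂]
    exact hmin (k - 1) (by omega)
  have hqne : q₁ 1 ≠ q₂ 1 := by
    simp only [hq₁, hq₂]
    have : k - 1 + 1 = k := by omega
    rw [this]; exact hk
  have hnomeet : ∀ a b, k ≤ a → k ≤ b → r₁ a ≠ r₂ b := by
    intro a b haa hbb
    have := meet hacyc hq₁r hq₂r hq0 hqne (a := a - (k - 1)) (b := b - (k - 1))
      (by omega) (by omega)
    simp only [hq₁, hq₂] at this
    rwa [show k - 1 + (a - (k - 1)) = a by omega, show k - 1 + (b - (k - 1)) = b by omega]
      at this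
  have hsub : r₁ '' (Set.Ici k) ⊆ symmDiff (Set.range r₁) (Set.range r₂) := by
    rintro _ ⟨a, ha, rfl⟩
    have ha' : k ≤ a := ha
    rw [Set.mem_symmDiff]
    left
    refine ⟨⟨a, rfl⟩, ?_⟩
    rintro ⟨b, hb⟩
    rcases lt_or_ge b k with hbk | hbk
    · have h3 : r₁ b = r₁ a := (hmin b hbk).trans hb
      have hab : b = a := h₁.1 h3
      omega
    · exact hnomeet a b ha' hbk hb.symm
  have hinf : (r₁ '' (Set.Ici k)).Infinite :=
    Set.Infinite.image (Set.injOn_of_injective h₁.1) (Set.Ici_infinite k)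
  exact (Set.not_infinite.mpr (hone r₁ r₂ h₁ h₂)) (hinf.mono hsub)

/-- prepend a vertex to a sequence -/
def cons (w : V) (ρ : ℕ → V) : ℕ → V
  | 0 => w
  | (n + 1) => ρ n

/-- the descendant set of `x` -/
def B (t : SimpleGraph V) (x : V) : Set V :=
  {v | ∃ r : ℕ → V, IsRay t r ∧ r 0 = v ∧ ∃ n, r n = x}

lemma step (hlf : ∀ v : V, {w | t.Adj v w}.Finite) (hacyc : t.IsAcyclic)
    (hone : ∀ r₁ r₂ : ℕ → V, IsRay t r₁ → IsRay t r₂ →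
      (symmDiff (Set.range r₁) (Set.range r₂)).Finite)
    {u : V} {ρ : ℕ → V} (hρ : IsRay t ρ) (h0 : ρ 0 = u)
    (hP : (B t u).Infinite) :
    ∃ w, IsRay t (cons w ρ) ∧ w ≠ ρ 1 ∧ (B t w).Infinite := by
  classical
  set N' : Set V := {w | t.Adj u w ∧ w ≠ ρ 1 ∧ IsRay t (cons w ρ)} with hN'
  have hN'fin : N'.Finite := (hlf u).subset (fun w hw => hw.1)
  have hkey : ∀ v ∈ B t u \ {u}, ∃ w ∈ N', v ∈ B t w := by
    rintro v ⟨⟨r, hr, hr0, n, hrn⟩, hvu⟩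
    have hn0 : n ≠ 0 := by
      intro h
      subst h
      exact hvu (by rw [← hr0, hrn]; rfl)
    -- the tail of r from n is a ray from u, hence equals ρ
    have htail : IsRay t (fun m => r (n + m)) := isray_shift hr n
    have htail0 : (fun m => r (n + m)) 0 = ρ 0 := by simp [hrn, h0]
    have heq : (fun m => r (n + m)) = ρ :=
      ray_unique hacyc hone htail hρ htail0
    have heq' : ∀ m, r (n + m) = ρ m := fun m => congrFun heq m
    set w := r (n - 1) with hw
    -- the tail from n-1 is `cons w ρ`
    have htail' : IsRay t (fun m => r (n - 1 + m)) := isray_shift hr (n - 1)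
    have hconseq : (fun m => r (n - 1 + m)) = cons w ρ := by
      funext m
      cases m with
      | zero => simp [cons, hw]
      | succ m =>
          show r (n - 1 + (m + 1)) = ρ m
          rw [show n - 1 + (m + 1) = n + m by omega]
          exact heq' m
    have hray : IsRay t (cons w ρ) := hconseq ▸ htail'
    have hwne : w ≠ ρ 1 := by
      intro h
      have : r (n - 1) = r (n + 1) := by rw [← hw, h, ← heq' 1]
      have := hr.1 this
      omega
    have hadj : t.Adj u w := by
      have := hr.2 (n - 1)
      rw [show n - 1 + 1 = n by omega, hrn] at this
      exact this.symm
    exact ⟨w, ⟨hadj, hwne, hray⟩, ⟨r, hr, hr0, n - 1, rfl⟩⟩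
  have hinf : (B t u \ {u}).Infinite := hP.diff (Set.finite_singleton u)
  by_contra hc
  push_neg at hc
  have hallfin : ∀ w ∈ N', (B t w).Finite := by
    intro w hw
    rw [← Set.not_infinite]
    intro h
    exact h (hc w hw.2.2 hw.2.1)
  have : (B t u \ {u}) ⊆ ⋃ w ∈ N', B t w := by
    intro v hv
    obtain ⟨w, hwN, hvB⟩ := hkey v hv
    exact Set.mem_biUnion hwN hvB
  exact (Set.not_infinite.mpr ((hN'fin.biUnion hallfin).subset this)) hinf

end Stmt11Aux

open Stmt11Aux in
/-- In an infinite locally finite tree `t` with one end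
(every two infinite self-avoiding paths have finite symmetric difference),
for every finite set `D` of vertices, the set `desc_t D` of vertices from
which some infinite self-avoiding path meets `D` is finite. -/
theorem stmt11 {V : Type*} (t : SimpleGraph V) [Infinite V]
    (hlf : ∀ v : V, {w | t.Adj v w}.Finite)
    (hconn : t.Connected) (hacyc : t.IsAcyclic)
    (hone : ∀ r₁ r₂ : ℕ → V, IsRay t r₁ → IsRay t r₂ →
      (symmDiff (Set.range r₁) (Set.range r₂)).Finite)
    (D : Set V) (hD : D.Finite) :
    {v | ∃ r : ℕ → V, IsRay t r ∧ r 0 = v ∧ ∃ n, r n ∈ D}.Finite := by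
  classical
  rw [← Set.not_infinite]
  intro hS
  -- pigeonhole: some x ∈ D has infinite descendant set
  have hcover : {v | ∃ r : ℕ → V, IsRay t r ∧ r 0 = v ∧ ∃ n, r n ∈ D}
      ⊆ ⋃ x ∈ D, B t x := by
    rintro v ⟨r, hr, hr0, n, hn⟩
    exact Set.mem_biUnion hn ⟨r, hr, hr0, n, rfl⟩
  obtain ⟨x, hxD, hBx⟩ : ∃ x ∈ D, (B t x).Infinite := by
    by_contra hc
    push_neg at hc
    have : ∀ x ∈ D, (B t x).Finite := by
      intro x hx
      rw [← Set.not_infinite]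
      exact Set.not_infinite.mpr (hc x hx)
    exact (Set.not_infinite.mpr ((hD.biUnion this).subset hcover)) hS
  -- a ray from x
  obtain ⟨v, r, hr, hr0, n, hn⟩ := hBx.nonempty
  set ρ₀ : ℕ → V := fun m => r (n + m) with hρ₀def
  have hρ₀ : IsRay t ρ₀ := isray_shift hr n
  have hB₀ : (B t (ρ₀ 0)).Infinite := by
    have : ρ₀ 0 = x := by simp [hρ₀def, hn]
    rw [this]; exact hBx
  -- the step function
  have stepfn : ∀ ρ : ℕ → V, IsRay t ρ → (B t (ρ 0)).Infinite →
      ∃ ρ' : ℕ → V, (IsRay t ρ' ∧ (B t (ρ' 0)).Infinite) ∧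
        (∀ m, ρ' (m + 1) = ρ m) ∧ ρ' 0 ≠ ρ 1 := by
    intro ρ hρ hB
    obtain ⟨w, hw1, hw2, hw3⟩ := step hlf hacyc hone hρ rfl hB
    exact ⟨cons w ρ, ⟨hw1, hw3⟩, fun m => rfl, hw2⟩
  choose F hF1 hF2 hF3 using stepfn
  -- recursive construction of the descending rays
  let g : ℕ → {ρ : ℕ → V // IsRay t ρ ∧ (B t (ρ 0)).Infinite} :=
    fun k => Nat.rec ⟨ρ₀, hρ₀, hB₀⟩
      (fun _ p => ⟨F p.1 p.2.1 p.2.2, hF1 p.1 p.2.1 p.2.2⟩) k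
  have hg0 : (g 0).1 = ρ₀ := rfl
  have hshift : ∀ k m, (g (k + 1)).1 (m + 1) = (g k).1 m :=
    fun k m => hF2 (g k).1 (g k).2.1 (g k).2.2 m
  set s : ℕ → V := fun k => (g k).1 0 with hsdef
  -- s j sits at position k - j in ρ_k
  have lemA : ∀ k j, j ≤ k → (g k).1 (k - j) = s j := by
    intro k
    induction k with
    | zero => intro j hj; interval_cases j; rfl
    | succ k ih =>
        intro j hj
        rcases Nat.eq_or_lt_of_le hj with h | h
        · subst h; simp; rfl
        · have hjk : j ≤ k := by omega
          rw [show k + 1 - j = (k - j) + 1 by omega, hshift k (k - j), ih j hjk]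
  have lemB : ∀ k m, (g k).1 (m + k) = ρ₀ m := by
    intro k
    induction k with
    | zero => intro m; rfl
    | succ k ih =>
        intro m
        rw [show m + (k + 1) = (m + k) + 1 from rfl, hshift k (m + k), ih m]
  -- s is a ray
  have hs : IsRay t s := by
    constructor
    · intro i j hij
      rcases le_total i j with h | h
      · have h1 : (g j).1 (j - i) = s i := lemA j i h
        have h2 : (g j).1 0 = s j := rfl
        rw [hij, ← h2] at h1
        have := (g j).2.1.1 h1
        omega
      · have h1 : (g i).1 (i - j) = s j := lemA i j h
        have h2 : (g i).1 0 = s i := rfl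
        rw [← hij, ← h2] at h1
        have := (g i).2.1.1 h1
        omega
    · intro m
      have h1 := (g (m + 1)).2.1.2 0
      have h2 : (g (m + 1)).1 1 = s m := by
        rw [show (1 : ℕ) = 0 + 1 from rfl, hshift m 0]
      rw [h2] at h1
      exact h1.symm
  -- s avoids ρ₀ from index 1 on
  have havoid : ∀ k, 1 ≤ k → s k ∉ Set.range ρ₀ := by
    rintro k hk ⟨m, hm⟩
    have h1 : (g k).1 (m + k) = ρ₀ m := lemB k m
    have h2 : (g k).1 0 = s k := rfl
    rw [hm, ← h2] at h1
    have := (g k).2.1.1 h1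
    omega
  have hsub : s '' (Set.Ici 1) ⊆ symmDiff (Set.range s) (Set.range ρ₀) := by
    rintro _ ⟨k, hk, rfl⟩
    rw [Set.mem_symmDiff]
    exact Or.inl ⟨⟨k, rfl⟩, havoid k hk⟩
  have hinf : (s '' (Set.Ici 1)).Infinite :=
    Set.Infinite.image (Set.injOn_of_injective hs.1) (Set.Ici_infinite 1)
  exact (Set.not_infinite.mpr (hone s ρ₀ hs hρ₀)) (hinf.mono hsub)
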